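/- For all real numbers a > 0 and b > 0, ∫₀^∞ r e^{−a r²} erf(b r) dr = b / (2 a √(a + b²)), where erf(x) = (2/√π) ∫₀^x e^{−u²} du is the error function. -/

import Mathlib

open Real MeasureTheory

/-- The error function `erf x = (2/√π) ∫₀ˣ e^{−u²} du`. -/
noncomputable def erf (x : ℝ) : ℝ :=
  (2 / Real.sqrt π) * ∫ u in (0 : ℝ)..x, Real.exp (-u ^ 2)

lemma erf_hasDerivAt (x : ℝ) :
    HasDerivAt erf (2 / Real.sqrt π * Real.exp (-x ^ 2)) x := by
  have hc : Continuous fun u : ℝ => Real.exp (-u ^ 2) := by continuity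
  have h : HasDerivAt (fun y : ℝ => ∫ u in (0 : ℝ)..y, Real.exp (-u ^ 2))
      (Real.exp (-x ^ 2)) x := by
    exact intervalIntegral.integral_hasDerivAt_right (hc.intervalIntegrable 0 x)
      (hc.stronglyMeasurableAtFilter _ _) hc.continuousAt
  exact h.const_mul (2 / Real.sqrt π)

lemma erf_abs_le (y : ℝ) : |erf y| ≤ 2 / Real.sqrt π * |y| := by
  have h : ‖∫ u in (0 : ℝ)..y, Real.exp (-u ^ 2)‖ ≤ 1 * |y - 0| := by
    apply intervalIntegral.norm_integral_le_of_norm_le_const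
    intro u _
    rw [Real.norm_eq_abs, abs_of_pos (Real.exp_pos _)]
    exact Real.exp_le_one_iff.2 (neg_nonpos.mpr (sq_nonneg u))
  have hπ : (0:ℝ) ≤ 2 / Real.sqrt π := by positivity
  calc |erf y| = 2 / Real.sqrt π * ‖∫ u in (0 : ℝ)..y, Real.exp (-u ^ 2)‖ := by
        rw [erf, abs_mul, abs_of_nonneg hπ, Real.norm_eq_abs]
    _ ≤ 2 / Real.sqrt π * (1 * |y - 0|) := by
        exact mul_le_mul_of_nonneg_left h hπ
    _ = 2 / Real.sqrt π * |y| := by ring_nf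

/-- For `a, b > 0`, `∫₀^∞ r e^{−a r²} erf (b r) dr = b / (2 a √(a + b²))`. -/
theorem integral_exp_mul_erf (a b : ℝ) (ha : 0 < a) (hb : 0 < b) :
    ∫ r in Set.Ioi (0 : ℝ), r * Real.exp (-a * r ^ 2) * erf (b * r) =
      b / (2 * a * Real.sqrt (a + b ^ 2)) := by
  have hπ : (0:ℝ) < Real.sqrt π := Real.sqrt_pos.2 Real.pi_pos
  set F : ℝ → ℝ := fun r => -(Real.exp (-a * r ^ 2) / (2 * a)) * erf (b * r) with hF
  set D : ℝ → ℝ := fun r => r * Real.exp (-a * r ^ 2) * erf (b * r)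
      - (b / (a * Real.sqrt π)) * Real.exp (-(a + b ^ 2) * r ^ 2) with hD
  -- derivative
  have hderiv : ∀ r : ℝ, HasDerivAt F (D r) r := by
    intro r
    have h1 : HasDerivAt (fun r : ℝ => -a * r ^ 2) (-a * (2 * r)) r := by
      simpa using ((hasDerivAt_pow 2 r).const_mul (-a))
    have h2 : HasDerivAt (fun r : ℝ => Real.exp (-a * r ^ 2))
        (Real.exp (-a * r ^ 2) * (-a * (2 * r))) r := h1.exp
    have hu : HasDerivAt (fun r : ℝ => -(Real.exp (-a * r ^ 2) / (2 * a)))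
        (r * Real.exp (-a * r ^ 2)) r := by
      have := ((h2.div_const (2 * a)).neg)
      refine this.congr_deriv ?_; symm
      field_simp
    have hv : HasDerivAt (fun r : ℝ => erf (b * r))
        (2 / Real.sqrt π * Real.exp (-(b * r) ^ 2) * b) r := by
      have hbr : HasDerivAt (fun r : ℝ => b * r) b r := by
        simpa using (hasDerivAt_id r).const_mul b
      exact (erf_hasDerivAt (b * r)).comp r hbr
    have := hu.mul hv
    refine this.congr_deriv ?_; symm
    simp only [hD]
    have hexp : Real.exp (-(a + b ^ 2) * r ^ 2)
        = Real.exp (-a * r ^ 2) * Real.exp (-(b * r) ^ 2) := by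
      rw [← Real.exp_add]; ring_nf
    rw [hexp]
    have h2a : (2 * a) ≠ 0 := by positivity
    field_simp
    ring
  -- integrability of first term
  have hint1 : IntegrableOn (fun r : ℝ => r * Real.exp (-a * r ^ 2) * erf (b * r))
      (Set.Ioi (0:ℝ)) := by
    have hg : IntegrableOn (fun x : ℝ => (2 / Real.sqrt π * b) * (x ^ (2:ℝ) * Real.exp (-a * x ^ 2)))
        (Set.Ioi (0:ℝ)) := (integrableOn_rpow_mul_exp_neg_mul_sq ha (by norm_num)).const_mul _
    apply Integrable.mono' hg
    · apply Continuous.aestronglyMeasurable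
      have hce : Continuous erf := by
        rw [continuous_iff_continuousAt]
        exact fun x => (erf_hasDerivAt x).differentiableAt.continuousAt
      exact (continuous_id.mul (by continuity)).mul (hce.comp (continuous_const.mul continuous_id))
    · filter_upwards [ae_restrict_mem measurableSet_Ioi] with x hx
      have hx0 : (0:ℝ) < x := hx
      have h1 : |erf (b * x)| ≤ 2 / Real.sqrt π * (b * x) := by
        have h := erf_abs_le (b * x)
        rwa [abs_of_pos (mul_pos hb hx0)] at h
      rw [Real.norm_eq_abs, abs_mul, abs_mul, abs_of_pos hx0,
        abs_of_pos (Real.exp_pos _), Real.rpow_two]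
      calc x * Real.exp (-a * x ^ 2) * |erf (b * x)|
          ≤ x * Real.exp (-a * x ^ 2) * (2 / Real.sqrt π * (b * x)) := by
            exact mul_le_mul_of_nonneg_left h1 (by positivity)
        _ = 2 / Real.sqrt π * b * (x ^ 2 * Real.exp (-a * x ^ 2)) := by ring
  -- integrability of second term
  have hab : (0:ℝ) < a + b ^ 2 := by positivity
  have hint2 : IntegrableOn (fun r : ℝ => (b / (a * Real.sqrt π)) * Real.exp (-(a + b ^ 2) * r ^ 2))
      (Set.Ioi (0:ℝ)) := ((integrable_exp_neg_mul_sq hab).const_mul _).integrableOn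
  have hintD : IntegrableOn D (Set.Ioi (0:ℝ)) := hint1.sub hint2
  -- limit of F at top
  have htend : Filter.Tendsto F Filter.atTop (nhds 0) := by
    have hlim : Filter.Tendsto (fun r : ℝ => (a * r ^ 2) ^ 1 * Real.exp (-(a * r ^ 2)))
        Filter.atTop (nhds 0) := by
      apply (tendsto_pow_mul_exp_neg_atTop_nhds_zero 1).comp
      apply Filter.Tendsto.const_mul_atTop ha
      simpa [pow_two] using (Filter.tendsto_id (α := ℝ)).atTop_mul_atTop₀ Filter.tendsto_id
    have hlim' : Filter.Tendsto (fun r : ℝ => (b / (a * Real.sqrt π)) *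
        ((a * r ^ 2) ^ 1 * Real.exp (-(a * r ^ 2)))) Filter.atTop (nhds 0) := by
      simpa using hlim.const_mul (b / (a * Real.sqrt π))
    apply squeeze_zero_norm' _ hlim'
    filter_upwards [Filter.eventually_ge_atTop (max 1 (1/a))] with r hr
    have hr1 : (1:ℝ) ≤ r := le_trans (le_max_left _ _) hr
    have hra : 1/a ≤ r := le_trans (le_max_right _ _) hr
    have hr0 : (0:ℝ) < r := lt_of_lt_of_le one_pos hr1
    have herf : |erf (b * r)| ≤ 2 / Real.sqrt π * (b * r) := by
      have h := erf_abs_le (b * r)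
      rwa [abs_of_pos (mul_pos hb hr0)] at h
    have hrle : r ≤ a * r ^ 2 := by
      have : 1 ≤ a * r := by
        rw [div_le_iff₀ ha] at hra
        linarith [hra]
      calc r = 1 * r := (one_mul r).symm
        _ ≤ (a * r) * r := by exact mul_le_mul_of_nonneg_right this hr0.le
        _ = a * r ^ 2 := by ring
    rw [Real.norm_eq_abs]
    simp only [hF]
    rw [abs_mul, abs_neg,
      abs_of_pos (show (0:ℝ) < Real.exp (-a * r ^ 2) / (2 * a) by positivity)]
    calc Real.exp (-a * r ^ 2) / (2 * a) * |erf (b * r)|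
        ≤ Real.exp (-a * r ^ 2) / (2 * a) * (2 / Real.sqrt π * (b * r)) := by
          exact mul_le_mul_of_nonneg_left herf (by positivity)
      _ = (b / (a * Real.sqrt π)) * (r * Real.exp (-a * r ^ 2)) := by
          field_simp
      _ ≤ (b / (a * Real.sqrt π)) * ((a * r ^ 2) * Real.exp (-a * r ^ 2)) := by
          apply mul_le_mul_of_nonneg_left _ (by positivity)
          exact mul_le_mul_of_nonneg_right hrle (Real.exp_pos _).le
      _ = b / (a * Real.sqrt π) * ((a * r ^ 2) ^ 1 * Real.exp (-(a * r ^ 2))) := by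
          ring_nf
  -- apply FTC
  have hFTC : ∫ r in Set.Ioi (0:ℝ), D r = 0 - F 0 :=
    integral_Ioi_of_hasDerivAt_of_tendsto' (fun x _ => hderiv x) hintD htend
  have hF0 : F 0 = 0 := by
    simp [hF, erf]
  rw [hF0, sub_zero] at hFTC
  have hsplit : ∫ r in Set.Ioi (0:ℝ), D r =
      (∫ r in Set.Ioi (0:ℝ), r * Real.exp (-a * r ^ 2) * erf (b * r))
      - ∫ r in Set.Ioi (0:ℝ), (b / (a * Real.sqrt π)) * Real.exp (-(a + b ^ 2) * r ^ 2) :=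
    integral_sub hint1 hint2
  have hgauss : ∫ r in Set.Ioi (0:ℝ), Real.exp (-(a + b ^ 2) * r ^ 2)
      = Real.sqrt (π / (a + b ^ 2)) / 2 := integral_gaussian_Ioi (a + b ^ 2)
  have : (∫ r in Set.Ioi (0:ℝ), r * Real.exp (-a * r ^ 2) * erf (b * r))
      = (b / (a * Real.sqrt π)) * (Real.sqrt (π / (a + b ^ 2)) / 2) := by
    have := hFTC
    rw [hsplit] at this
    rw [sub_eq_zero] at this
    rw [this, integral_const_mul, hgauss]
  rw [this, Real.sqrt_div Real.pi_pos.le]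
  have hab' : (0:ℝ) < Real.sqrt (a + b ^ 2) := Real.sqrt_pos.2 hab
  field_simp
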